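/- If each P ∈ P is atomless and E is an (ε,δ)-approximate e-variable (E^P[min(E,t)] ≤ 1+ε_P+δ_P t for all t ≥ 0), then for each P ∈ P there exists an event A with P(A) = 1−δ_P and E^P[E·1_A] ≤ 1+ε_P. -/

import Mathlib

open MeasureTheory
open scoped ENNReal

lemma split_lemma {Ω : Type*} [MeasurableSpace Ω] (P : Measure Ω) [IsProbabilityMeasure P]
    (U : Ω → ℝ) (hU : Measurable U) (hmap : Measure.map U P = volume.restrict (Set.Icc (0:ℝ) 1))
    (B : Set Ω) (hB : MeasurableSet B) (r : ℝ≥0∞) (hr : r ≤ P B) :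
    ∃ C : Set Ω, MeasurableSet C ∧ C ⊆ B ∧ P C = r := by
  set f : ℝ → ℝ := fun c => (P (B ∩ U ⁻¹' Set.Iic c)).toReal with hf
  have hfin : ∀ s, P s ≠ ∞ := fun s => measure_ne_top P s
  have hUIic : ∀ c : ℝ, P (U ⁻¹' Set.Iic c) = volume (Set.Icc (0:ℝ) 1 ∩ Set.Iic c) := by
    intro c
    rw [← Measure.map_apply hU measurableSet_Iic, hmap,
      Measure.restrict_apply measurableSet_Iic, Set.inter_comm]
  have hlip : LipschitzWith 1 f := by
    apply LipschitzWith.of_dist_le_mul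
    intro c c'
    wlog h : c' ≤ c generalizing c c'
    · rw [dist_comm, dist_comm c c']; exact this c' c (le_of_not_ge h)
    have hsub : B ∩ U ⁻¹' Set.Iic c = (B ∩ U ⁻¹' Set.Iic c') ∪ (B ∩ U ⁻¹' Set.Ioc c' c) := by
      rw [← Set.inter_union_distrib_left, ← Set.preimage_union, Set.Iic_union_Ioc_eq_Iic h]
    have hdisj : Disjoint (B ∩ U ⁻¹' Set.Iic c') (B ∩ U ⁻¹' Set.Ioc c' c) := by
      apply Set.disjoint_of_subset Set.inter_subset_right Set.inter_subset_right
      simp only [Set.disjoint_left, Set.mem_preimage, Set.mem_Iic, Set.mem_Ioc]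
      intro a ha h'; exact absurd h'.1 (not_lt.2 ha)
    have hmeas := measure_union (μ := P) hdisj (hB.inter (hU measurableSet_Ioc))
    rw [← hsub] at hmeas
    have hle : P (B ∩ U ⁻¹' Set.Ioc c' c) ≤ ENNReal.ofReal (c - c') := by
      calc P (B ∩ U ⁻¹' Set.Ioc c' c) ≤ P (U ⁻¹' Set.Ioc c' c) :=
            measure_mono Set.inter_subset_right
        _ = volume (Set.Icc (0:ℝ) 1 ∩ Set.Ioc c' c) := by
            rw [← Measure.map_apply hU measurableSet_Ioc, hmap,
              Measure.restrict_apply measurableSet_Ioc, Set.inter_comm]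
        _ ≤ volume (Set.Ioc c' c) := measure_mono Set.inter_subset_right
        _ = ENNReal.ofReal (c - c') := by rw [Real.volume_Ioc]
    have h1 : f c' ≤ f c := by
      apply ENNReal.toReal_mono (hfin _)
      exact measure_mono (Set.inter_subset_inter_right _ (Set.preimage_mono (Set.Iic_subset_Iic.2 h)))
    have h2 : f c - f c' ≤ c - c' := by
      have := ENNReal.toReal_mono (by simp) hle
      rw [ENNReal.toReal_ofReal (by linarith)] at this
      have h3 : f c = f c' + (P (B ∩ U ⁻¹' Set.Ioc c' c)).toReal := by
        rw [hf]; simp only; rw [hmeas, ENNReal.toReal_add (hfin _) (hfin _)]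
      linarith
    simp only [Real.dist_eq, NNReal.coe_one, one_mul, abs_of_nonneg (sub_nonneg.2 h)]
    rw [abs_sub_le_iff]; constructor <;> linarith
  have hf0 : f 0 = 0 := by
    have : P (B ∩ U ⁻¹' Set.Iic 0) ≤ P (U ⁻¹' Set.Iic 0) := measure_mono Set.inter_subset_right
    rw [hUIic 0] at this
    have : P (B ∩ U ⁻¹' Set.Iic 0) = 0 := by
      refine le_antisymm (this.trans_eq ?_) (zero_le)
      have : Set.Icc (0:ℝ) 1 ∩ Set.Iic 0 = {0} := by
        ext x; simp [Set.mem_Icc, Set.mem_Iic]; constructor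
        · rintro ⟨⟨h1, _⟩, h3⟩; linarith
        · rintro rfl; norm_num
      rw [this, Real.volume_singleton]
    simp [hf, this]
  have hf1 : f 1 = (P B).toReal := by
    have hc : P (B ∩ U ⁻¹' Set.Iic 1) = P B := by
      have h1 : P (U ⁻¹' Set.Iic 1)ᶜ = 0 := by
        have : P (U ⁻¹' Set.Iic 1) = 1 := by
          rw [hUIic 1]
          have : Set.Icc (0:ℝ) 1 ∩ Set.Iic 1 = Set.Icc (0:ℝ) 1 := by
            rw [Set.inter_eq_left]; intro x hx; exact hx.2
          rw [this, Real.volume_Icc]; norm_num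
        rw [measure_compl (hU measurableSet_Iic) (hfin _), this, measure_univ, tsub_self]
      calc P (B ∩ U ⁻¹' Set.Iic 1) = P (B ∩ U ⁻¹' Set.Iic 1) + P (B ∩ (U ⁻¹' Set.Iic 1)ᶜ) := by
            rw [measure_inter_null_of_null_right _ h1, add_zero]
        _ = P B := by
            rw [← measure_union (Set.disjoint_of_subset Set.inter_subset_right
                Set.inter_subset_right disjoint_compl_right)
              (hB.inter (hU measurableSet_Iic).compl),
              ← Set.inter_union_distrib_left, Set.union_compl_self, Set.inter_univ]
    simp [hf, hc]
  have hmem : r.toReal ∈ Set.Icc (f 0) (f 1) := by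
    rw [hf0, hf1]
    exact ⟨ENNReal.toReal_nonneg, ENNReal.toReal_mono (hfin _) hr⟩
  obtain ⟨c, _, hc⟩ := intermediate_value_Icc (by norm_num : (0:ℝ) ≤ 1)
    hlip.continuous.continuousOn hmem
  refine ⟨B ∩ U ⁻¹' Set.Iic c, hB.inter (hU measurableSet_Iic), Set.inter_subset_left, ?_⟩
  have : (P (B ∩ U ⁻¹' Set.Iic c)).toReal = r.toReal := hc
  exact (ENNReal.toReal_eq_toReal_iff' (hfin _) (ne_top_of_le_ne_top (hfin B) hr)).mp this

lemma key_bound {Ω : Type*} [MeasurableSpace Ω] (P : Measure Ω) [IsProbabilityMeasure P]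
    (E : Ω → ℝ≥0∞) (A : Set Ω) (hA : MeasurableSet A)
    (t : ℝ≥0∞) (ht : t ≠ ∞) (hsub : ∀ ω ∉ A, t ≤ E ω)
    (d e : ℝ≥0∞) (hd : d ≠ ∞) (hPAc : P Aᶜ = d)
    (hint : ∫⁻ ω, min (E ω) t ∂P ≤ 1 + e + d * t) :
    ∫⁻ ω in A, min (E ω) t ∂P ≤ 1 + e := by
  have hsplit := lintegral_add_compl (fun ω => min (E ω) t) hA (μ := P)
  have hAc : ∫⁻ ω in Aᶜ, min (E ω) t ∂P = t * d := by
    rw [setLIntegral_congr_fun hA.compl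
      (fun ω hω => min_eq_right (hsub ω hω)),
      setLIntegral_const, hPAc]
  rw [hAc] at hsplit
  have h2 : ∫⁻ ω in A, min (E ω) t ∂P + t * d ≤ (1 + e) + t * d := by
    rw [hsplit]; calc ∫⁻ ω, min (E ω) t ∂P ≤ 1 + e + d * t := hint
      _ = (1 + e) + t * d := by rw [mul_comm]
  exact (ENNReal.add_le_add_iff_right (ENNReal.mul_ne_top ht hd)).mp h2

lemma tail_le {Ω : Type*} [MeasurableSpace Ω] (P : Measure Ω) [IsProbabilityMeasure P]
    (E : Ω → ℝ≥0∞) (hE : Measurable E) (εP δP : ℝ) (hε : 0 ≤ εP) (hδ0 : 0 ≤ δP)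
    (happ : ∀ t : ℝ, 0 ≤ t → ∫⁻ ω, min (E ω) (ENNReal.ofReal t) ∂P ≤
      1 + ENNReal.ofReal εP + ENNReal.ofReal δP * ENNReal.ofReal t) :
    P {ω | E ω = ∞} ≤ ENNReal.ofReal δP := by
  by_contra hcon
  push_neg at hcon
  set S := {ω | E ω = ∞} with hS
  have hSm : MeasurableSet S := hE (measurableSet_singleton ∞)
  set p := (P S).toReal with hp
  have hfin : P S ≠ ∞ := measure_ne_top P S
  have hplt : δP < p := by
    rw [hp, ← ENNReal.ofReal_lt_iff_lt_toReal hδ0 hfin]; exact hcon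
  set t := (2 + εP) / (p - δP) with htdef
  have htpos : 0 ≤ t := div_nonneg (by linarith) (by linarith)
  have hlow : ENNReal.ofReal t * P S ≤ ∫⁻ ω, min (E ω) (ENNReal.ofReal t) ∂P := by
    calc ENNReal.ofReal t * P S = ∫⁻ _ in S, ENNReal.ofReal t ∂P := (setLIntegral_const S _).symm
      _ = ∫⁻ ω in S, min (E ω) (ENNReal.ofReal t) ∂P := by
          refine (setLIntegral_congr_fun hSm (fun ω hω => ?_)).symm
          rw [hω]; exact min_eq_right le_top
      _ ≤ ∫⁻ ω, min (E ω) (ENNReal.ofReal t) ∂P := setLIntegral_le_lintegral _ _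
  have hchain := hlow.trans (happ t htpos)
  have hreal : t * p ≤ 1 + εP + δP * t := by
    have := ENNReal.toReal_mono (by finiteness) hchain
    rw [ENNReal.toReal_mul, ENNReal.toReal_add (by finiteness) (by finiteness),
      ENNReal.toReal_add (by finiteness) (by finiteness), ENNReal.toReal_mul,
      ENNReal.toReal_ofReal htpos, ENNReal.toReal_ofReal hε, ENNReal.toReal_ofReal hδ0,
      ENNReal.toReal_one] at this
    exact this
  have hteq : t * (p - δP) = 2 + εP := by
    rw [htdef, div_mul_cancel₀]; linarith
  nlinarith [hteq]

/-- Direction (E1) ⇒ (E2) under atomlessness: if each `P ∈ Unv` admits a uniform random variable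
and `E` is an `(ε,δ)`-approximate e-variable, then for each `P ∈ Unv` there exists an event `A`
with `P(A) = 1 − δ_P` and `E^P[E·1_A] ≤ 1 + ε_P`. -/
theorem approx_e_to_event {Ω : Type*} [MeasurableSpace Ω] (Unv : Set (Measure Ω))
    (hprob : ∀ P ∈ Unv, IsProbabilityMeasure P)
    (hatomless : ∀ P ∈ Unv, ∃ U : Ω → ℝ, Measurable U ∧
      Measure.map U P = volume.restrict (Set.Icc (0:ℝ) 1))
    (ε δ : Measure Ω → ℝ)
    (hε : ∀ P ∈ Unv, 0 ≤ ε P) (hδ : ∀ P ∈ Unv, 0 ≤ δ P ∧ δ P ≤ 1)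
    (E : Ω → ℝ≥0∞) (hEmeas : Measurable E)
    (happrox : ∀ P ∈ Unv, ∀ t : ℝ, 0 ≤ t →
      ∫⁻ ω, min (E ω) (ENNReal.ofReal t) ∂P ≤
        1 + ENNReal.ofReal (ε P) + ENNReal.ofReal (δ P) * ENNReal.ofReal t) :
    ∀ P ∈ Unv, ∃ A : Set Ω, MeasurableSet A ∧
      P A = 1 - ENNReal.ofReal (δ P) ∧
      ∫⁻ ω in A, E ω ∂P ≤ 1 + ENNReal.ofReal (ε P) := by
  intro P hP
  haveI := hprob P hP
  obtain ⟨U, hU, hmap⟩ := hatomless P hP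
  obtain ⟨hδ0, hδ1⟩ := hδ P hP
  set d := ENNReal.ofReal (δ P) with hd
  set e := ENNReal.ofReal (ε P) with he
  have hd1 : d ≤ 1 := by rw [hd]; exact ENNReal.ofReal_le_one.mpr hδ1
  have hdne : d ≠ ∞ := ENNReal.ofReal_ne_top
  have hG : ∀ s : ℝ, MeasurableSet {ω | E ω ≤ ENNReal.ofReal s} :=
    fun s => hEmeas measurableSet_Iic
  have hGmono : ∀ s s' : ℝ, s ≤ s' →
      P {ω | E ω ≤ ENNReal.ofReal s} ≤ P {ω | E ω ≤ ENNReal.ofReal s'} :=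
    fun s s' h => measure_mono (fun ω hω => le_trans hω (ENNReal.ofReal_le_ofReal h))
  set S := {s : ℝ | 0 ≤ s ∧ 1 - d ≤ P {ω | E ω ≤ ENNReal.ofReal s}} with hSdef
  by_cases hS : S.Nonempty
  · -- quantile case
    have hbdd : BddBelow S := ⟨0, fun s hs => hs.1⟩
    set t := sInf S with htdef
    have ht0 : 0 ≤ t := le_csInf hS (fun s hs => hs.1)
    have hGt : 1 - d ≤ P {ω | E ω ≤ ENNReal.ofReal t} := by
      have hseteq : {ω | E ω ≤ ENNReal.ofReal t} =
          ⋂ n : ℕ, {ω | E ω ≤ ENNReal.ofReal (t + 1/(n+1))} := by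
        ext ω; simp only [Set.mem_iInter, Set.mem_setOf_eq]
        constructor
        · intro h n
          have h1 : (0:ℝ) < 1/(n+1) := by positivity
          exact h.trans (ENNReal.ofReal_le_ofReal (by linarith))
        · intro h
          refine ENNReal.le_of_forall_pos_le_add fun εn hεn _ => ?_
          obtain ⟨n, hn⟩ := exists_nat_one_div_lt (show (0:ℝ) < εn from hεn)
          calc E ω ≤ ENNReal.ofReal (t + 1/(n+1)) := h n
            _ = ENNReal.ofReal t + ENNReal.ofReal (1/(n+1)) :=
                ENNReal.ofReal_add ht0 (by positivity)
            _ ≤ ENNReal.ofReal t + εn := by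
                gcongr
                rw [← ENNReal.ofReal_coe_nnreal]
                exact ENNReal.ofReal_le_ofReal hn.le
      have hmono : Antitone (fun n : ℕ => {ω | E ω ≤ ENNReal.ofReal (t + 1/(n+1))}) := by
        intro n m hnm ω hω
        have h1 : (1:ℝ)/(m+1) ≤ 1/(n+1) :=
          one_div_le_one_div_of_le (by positivity) (by exact_mod_cast Nat.succ_le_succ hnm)
        exact le_trans hω (ENNReal.ofReal_le_ofReal (by linarith))
      rw [hseteq, hmono.measure_iInter (fun n => (hG _).nullMeasurableSet)
        ⟨0, measure_ne_top P _⟩]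
      refine le_iInf fun n => ?_
      have h1 : (0:ℝ) < 1/(n+1) := by positivity
      obtain ⟨s, hsS, hslt⟩ := exists_lt_of_csInf_lt hS (show sInf S < t + 1/(n+1) by
        rw [← htdef]; linarith)
      exact le_trans hsS.2 (hGmono s _ hslt.le)
    have hlt_meas : MeasurableSet {ω | E ω < ENNReal.ofReal t} := hEmeas measurableSet_Iio
    have hGlt : P {ω | E ω < ENNReal.ofReal t} ≤ 1 - d := by
      rcases eq_or_lt_of_le ht0 with h0 | h0
      · have hempty : {ω | E ω < ENNReal.ofReal t} = ∅ := by
          ext ω; simp [← h0]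
        simp [hempty]
      · set s : ℕ → ℝ := fun n => max (t - 1/(n+1)) 0 with hsdef
        have hs_lt : ∀ n, s n < t := by
          intro n
          have h1 : (0:ℝ) < 1/(n+1) := by positivity
          exact max_lt (by linarith) h0
        have hsub : {ω | E ω < ENNReal.ofReal t} ⊆
            ⋃ n, {ω | E ω ≤ ENNReal.ofReal (s n)} := by
          intro ω hω
          have hne : E ω ≠ ∞ := (lt_of_lt_of_le hω le_top).ne
          have ha : (E ω).toReal < t := (ENNReal.lt_ofReal_iff_toReal_lt hne).mp hω
          obtain ⟨n, hn⟩ := exists_nat_one_div_lt (sub_pos.2 ha)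
          refine Set.mem_iUnion.2 ⟨n, ?_⟩
          show E ω ≤ ENNReal.ofReal (s n)
          rw [ENNReal.le_ofReal_iff_toReal_le hne (le_max_right _ _)]
          have h2 : (E ω).toReal ≤ t - 1/(n+1) := by linarith
          exact h2.trans (le_max_left _ _)
        have hsm : Monotone (fun n : ℕ => {ω | E ω ≤ ENNReal.ofReal (s n)}) := by
          intro n m hnm ω hω
          have h1 : (1:ℝ)/(m+1) ≤ 1/(n+1) :=
            one_div_le_one_div_of_le (by positivity) (by exact_mod_cast Nat.succ_le_succ hnm)
          refine le_trans hω (ENNReal.ofReal_le_ofReal ?_)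
          exact max_le_max (by linarith) le_rfl
        calc P {ω | E ω < ENNReal.ofReal t} ≤ P (⋃ n, {ω | E ω ≤ ENNReal.ofReal (s n)}) :=
              measure_mono hsub
          _ = ⨆ n, P {ω | E ω ≤ ENNReal.ofReal (s n)} := hsm.measure_iUnion
          _ ≤ 1 - d := by
              refine iSup_le fun n => ?_
              have hnot : s n ∉ S := fun hmem => absurd (csInf_le hbdd hmem) (not_le.2 (hs_lt n))
              rw [hSdef] at hnot
              simp only [Set.mem_setOf_eq, not_and, not_le] at hnot
              exact (hnot (le_max_right _ _)).le
    have hBmeas : MeasurableSet {ω | E ω = ENNReal.ofReal t} :=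
      hEmeas (measurableSet_singleton _)
    have hdisj : Disjoint {ω | E ω < ENNReal.ofReal t} {ω | E ω = ENNReal.ofReal t} := by
      rw [Set.disjoint_left]; intro ω h1 h2
      exact absurd h2 (ne_of_lt h1)
    have hdecomp : P {ω | E ω ≤ ENNReal.ofReal t} =
        P {ω | E ω < ENNReal.ofReal t} + P {ω | E ω = ENNReal.ofReal t} := by
      rw [← measure_union hdisj hBmeas]
      congr 1; ext ω
      simp only [Set.mem_setOf_eq, Set.mem_union]
      exact ⟨fun h => lt_or_eq_of_le h, fun h => h.elim le_of_lt le_of_eq⟩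
    set r := (1 - d) - P {ω | E ω < ENNReal.ofReal t} with hrdef
    have hr : r ≤ P {ω | E ω = ENNReal.ofReal t} := by
      rw [hrdef, tsub_le_iff_left]
      calc 1 - d ≤ P {ω | E ω ≤ ENNReal.ofReal t} := hGt
        _ = P {ω | E ω < ENNReal.ofReal t} + P {ω | E ω = ENNReal.ofReal t} := hdecomp
    obtain ⟨C, hCmeas, hCsub, hCP⟩ := split_lemma P U hU hmap _ hBmeas r hr
    set A := {ω | E ω < ENNReal.ofReal t} ∪ C with hAdef
    have hAmeas : MeasurableSet A := hlt_meas.union hCmeas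
    have hPA : P A = 1 - d := by
      rw [hAdef, measure_union (Set.disjoint_of_subset le_rfl hCsub hdisj) hCmeas, hCP, hrdef,
        add_tsub_cancel_of_le hGlt]
    have hPAc : P Aᶜ = d := by
      rw [prob_compl_eq_one_sub hAmeas, hPA, ENNReal.sub_sub_cancel ENNReal.one_ne_top hd1]
    have hcompl : ∀ ω ∉ A, ENNReal.ofReal t ≤ E ω := fun ω hω =>
      le_of_not_gt fun hlt => hω (Or.inl hlt)
    have hkb := key_bound P E A hAmeas (ENNReal.ofReal t) ENNReal.ofReal_ne_top hcompl d e
      hdne hPAc (happrox P hP t ht0)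
    refine ⟨A, hAmeas, hPA, ?_⟩
    calc ∫⁻ ω in A, E ω ∂P = ∫⁻ ω in A, min (E ω) (ENNReal.ofReal t) ∂P := by
          refine setLIntegral_congr_fun hAmeas (fun ω hω => ?_)
          rcases hω with h | h
          · exact (min_eq_left h.le).symm
          · exact (min_eq_left (le_of_eq (hCsub h))).symm
      _ ≤ 1 + e := hkb
  · -- S empty case
    have hSempty : ∀ s : ℝ, 0 ≤ s → ¬(1 - d ≤ P {ω | E ω ≤ ENNReal.ofReal s}) := by
      intro s hs hcon; exact hS ⟨s, hs, hcon⟩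
    have hinf_meas : MeasurableSet {ω | E ω = ∞} := hEmeas (measurableSet_singleton _)
    have hp_le : P {ω | E ω = ∞} ≤ d :=
      tail_le P E hEmeas (ε P) (δ P) (hε P hP) hδ0 (happrox P hP)
    set A := {ω | E ω = ∞}ᶜ with hAdef
    have hAmeas : MeasurableSet A := hinf_meas.compl
    have hne_eq : A = ⋃ n : ℕ, {ω | E ω ≤ ENNReal.ofReal n} := by
      ext ω
      simp only [hAdef, Set.mem_compl_iff, Set.mem_setOf_eq, Set.mem_iUnion]
      constructor
      · intro h
        obtain ⟨n, hn⟩ := exists_nat_ge (E ω).toReal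
        exact ⟨n, (ENNReal.le_ofReal_iff_toReal_le h (Nat.cast_nonneg n)).mpr hn⟩
      · rintro ⟨n, hn⟩
        exact (lt_of_le_of_lt hn ENNReal.ofReal_lt_top).ne
    have hfin_le : P A ≤ 1 - d := by
      have hm : Monotone (fun n : ℕ => {ω | E ω ≤ ENNReal.ofReal n}) := fun n m hnm ω hω =>
        le_trans hω (ENNReal.ofReal_le_ofReal (by exact_mod_cast hnm))
      rw [hne_eq, hm.measure_iUnion]
      exact iSup_le fun n => not_le.1 (hSempty n (Nat.cast_nonneg n)) |>.le
    have hp_ge : d ≤ P {ω | E ω = ∞} := by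
      have h1 : P {ω | E ω = ∞} = 1 - P A := by
        rw [prob_compl_eq_one_sub hinf_meas,
          ENNReal.sub_sub_cancel ENNReal.one_ne_top prob_le_one]
      rw [h1]
      calc d = 1 - (1 - d) := (ENNReal.sub_sub_cancel ENNReal.one_ne_top hd1).symm
        _ ≤ 1 - P A := tsub_le_tsub_left hfin_le 1
    have hp : P {ω | E ω = ∞} = d := le_antisymm hp_le hp_ge
    have hPA : P A = 1 - d := by rw [prob_compl_eq_one_sub hinf_meas, hp]
    have hPAc : P Aᶜ = d := by rw [hAdef, compl_compl, hp]
    have hcompl : ∀ n : ℕ, ∀ ω ∉ A, ENNReal.ofReal n ≤ E ω := by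
      intro n ω hω
      rw [hAdef, Set.notMem_compl_iff] at hω
      rw [hω]; exact le_top
    have hkb : ∀ n : ℕ, ∫⁻ ω in A, min (E ω) (ENNReal.ofReal n) ∂P ≤ 1 + e := fun n =>
      key_bound P E A hAmeas (ENNReal.ofReal n) ENNReal.ofReal_ne_top (hcompl n) d e
        hdne hPAc (happrox P hP n (Nat.cast_nonneg n))
    refine ⟨A, hAmeas, hPA, ?_⟩
    have hmonof : Monotone (fun n : ℕ => fun ω => min (E ω) (ENNReal.ofReal n)) :=
      fun n m hnm ω => min_le_min le_rfl (ENNReal.ofReal_le_ofReal (by exact_mod_cast hnm))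
    have hpt : ∫⁻ ω in A, E ω ∂P = ⨆ n : ℕ, ∫⁻ ω in A, min (E ω) (ENNReal.ofReal n) ∂P := by
      rw [← lintegral_iSup (fun n => hEmeas.min measurable_const) hmonof]
      refine setLIntegral_congr_fun hAmeas (fun ω hω => ?_)
      have hne : E ω ≠ ∞ := hω
      refine le_antisymm ?_ (iSup_le fun n => min_le_left _ _)
      obtain ⟨n, hn⟩ := exists_nat_ge (E ω).toReal
      refine le_iSup_of_le n ?_
      rw [min_eq_left ((ENNReal.le_ofReal_iff_toReal_le hne (Nat.cast_nonneg n)).mpr hn)]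
    rw [hpt]
    exact iSup_le hkb
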